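/- Suppose x + yi ∈ Oct_n and 2^l exactly divides gcd(x, y) with l ≠ ⌊n/2⌋ + 1 (and x + yi ≠ 0). Then l ≤ ⌊n/2⌋ and x + yi ∈ B_{n+1}. -/

import Mathlib

def w (n : ℕ) : ℕ := if n % 2 = 0 then 3 * 2 ^ (n / 2) else 4 * 2 ^ (n / 2)

def Bset (n : ℕ) : Set GaussianInt :=
  {z | ∃ v : ℕ → GaussianInt,
    (∀ j, v j ∈ ({0, 1, -1, ⟨0, 1⟩, ⟨0, -1⟩} : Set GaussianInt)) ∧
    z = ∑ j ∈ Finset.range (n + 1), v j * (⟨1, 1⟩ : GaussianInt) ^ j}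

lemma w_even_eq (k : ℕ) : w (2*k) = 3 * 2^k := by
  unfold w; rw [if_pos (by omega)]
  have h : 2*k/2 = k := by omega
  rw [h]

lemma w_odd_eq (k : ℕ) : w (2*k+1) = 4 * 2^k := by
  unfold w; rw [if_neg (by omega)]
  have h : (2*k+1)/2 = k := by omega
  rw [h]

lemma w_cases (n : ℕ) : ∃ k, (n = 2*k ∧ w n = 3*2^k ∧ w (n+1) = 4*2^k ∧ n/2 = k)
    ∨ (n = 2*k+1 ∧ w n = 4*2^k ∧ w (n+1) = 6*2^k ∧ n/2 = k) := by
  refine ⟨n/2, ?_⟩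
  rcases Nat.even_or_odd n with ⟨k, hk⟩ | ⟨k, hk⟩
  · left
    have h1 : n = 2*(n/2) := by omega
    have h2 : n/2 = k := by omega
    constructor
    · omega
    have hn2 : n = 2*k := by omega
    have hq : 2*k/2 = k := by omega
    refine ⟨by rw [hn2, w_even_eq, hq], ?_, rfl⟩
    have : n + 1 = 2*k+1 := by omega
    rw [this, w_odd_eq, h2]
  · right
    have h2 : n/2 = k := by omega
    constructor
    · omega
    have hn : n = 2*k+1 := by omega
    have hq : (2*k+1)/2 = k := by omega
    refine ⟨by rw [hn, w_odd_eq, hq], ?_, rfl⟩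
    have : n + 1 = 2*(k+1) := by omega
    rw [this, w_even_eq, h2, pow_succ]; ring

lemma three_le_w (n : ℕ) : 3 ≤ w n := by
  obtain ⟨k, h | h⟩ := w_cases n <;>
    [skip; skip] <;>
  · have := Nat.one_le_two_pow (n := k)
    omega

lemma w_facts (n : ℕ) : w (n+2) = 2 * w n ∧ 2 ∣ w (n+1) ∧ 3 ≤ w (n+1) ∧ w (n+1) + 2 ≤ 2 * w n := by
  obtain ⟨k, ⟨hn, h1, h2, _⟩ | ⟨hn, h1, h2, _⟩⟩ := w_cases n
  · have h3 : w (n+2) = 3*2^(k+1) := by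
      have : n + 2 = 2*(k+1) := by omega
      rw [this, w_even_eq]
    have := Nat.one_le_two_pow (n := k)
    rw [pow_succ] at h3
    omega
  · have h3 : w (n+2) = 4*2^(k+1) := by
      have : n + 2 = 2*(k+1)+1 := by omega
      rw [this, w_odd_eq]
    have := Nat.one_le_two_pow (n := k)
    rw [pow_succ] at h3
    omega

lemma w_gap1 (n : ℕ) : w n + 2^(n/2) ≤ w (n+1) := by
  obtain ⟨k, ⟨hn, h1, h2, h3⟩ | ⟨hn, h1, h2, h3⟩⟩ := w_cases n <;> rw [h3] <;> omega

lemma w_gap2 (n : ℕ) : w (n+1) + 2 * 2^(n/2) ≤ 2 * w n := by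
  obtain ⟨k, ⟨hn, h1, h2, h3⟩ | ⟨hn, h1, h2, h3⟩⟩ := w_cases n <;> rw [h3] <;> omega

lemma w_le_pow (n : ℕ) : w n ≤ 2^(n/2+2) := by
  obtain ⟨k, ⟨hn, h1, h2, h3⟩ | ⟨hn, h1, h2, h3⟩⟩ := w_cases n <;> rw [h3, pow_succ, pow_succ] <;> omega

lemma w_add_two_mul (k l : ℕ) : w (k + 2*l) = 2^l * w k := by
  induction l with
  | zero => simp
  | succ l ih =>
    have h : k + 2*(l+1) = (k + 2*l) + 2 := by omega
    rw [h, (w_facts (k + 2*l)).1, ih, pow_succ]; ring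



lemma digit_mem_Bset (z : GaussianInt)
    (hz : z ∈ ({0, 1, -1, ⟨0, 1⟩, ⟨0, -1⟩} : Set GaussianInt)) (n : ℕ) : z ∈ Bset n := by
  refine ⟨fun j => if j = 0 then z else 0,
    fun j => by dsimp only; split_ifs; exacts [hz, by left; rfl], ?_⟩
  rw [Finset.sum_eq_single_of_mem 0 (Finset.mem_range.mpr (Nat.succ_pos n))
    (by intro b _ hb; simp [hb])]
  simp

lemma Bset_shift (v0 : GaussianInt) (hv0 : v0 ∈ ({0, 1, -1, ⟨0, 1⟩, ⟨0, -1⟩} : Set GaussianInt))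
    (z : GaussianInt) (n : ℕ) (hz : z ∈ Bset n) : v0 + ⟨1, 1⟩ * z ∈ Bset (n + 1) := by
  obtain ⟨v, hv, rfl⟩ := hz
  refine ⟨fun j => if j = 0 then v0 else v (j - 1),
    fun j => by dsimp only; split_ifs; exacts [hv0, hv _], ?_⟩
  rw [Finset.sum_range_succ' _ (n + 1)]
  have h : ∀ i ∈ Finset.range (n + 1),
      (if i + 1 = 0 then v0 else v (i + 1 - 1)) * (⟨1, 1⟩ : GaussianInt) ^ (i + 1)
      = (⟨1, 1⟩ : GaussianInt) * (v i * (⟨1, 1⟩ : GaussianInt) ^ i) := by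
    intro i _
    simp [pow_succ]; ring
  rw [Finset.sum_congr rfl h, ← Finset.mul_sum]
  simp [add_comm]

lemma Bset_negI (z : GaussianInt) (n : ℕ) (hz : z ∈ Bset n) :
    (⟨0, -1⟩ : GaussianInt) * z ∈ Bset n := by
  obtain ⟨v, hv, rfl⟩ := hz
  refine ⟨fun j => ⟨0, -1⟩ * v j, fun j => ?_, ?_⟩
  · dsimp only
    simp only [Set.mem_insert_iff, Set.mem_singleton_iff] at hv ⊢
    rcases hv j with h | h | h | h | h <;> rw [h]
    · left; exact mul_zero _
    · right; right; right; right; ext <;> simp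
    · right; right; right; left; ext <;> simp
    · right; left; ext <;> simp
    · right; right; left; ext <;> simp
  · rw [Finset.mul_sum]
    exact Finset.sum_congr rfl (fun i _ => by ring)

lemma Bset_double (z : GaussianInt) (n : ℕ) (hz : z ∈ Bset n) :
    ((2 : ℤ) : GaussianInt) * z ∈ Bset (n + 2) := by
  have h1 := Bset_negI z n hz
  have h2 := Bset_shift 0 (by left; rfl) _ n h1
  have h3 := Bset_shift 0 (by left; rfl) _ (n+1) h2
  have he : ((2 : ℤ) : GaussianInt) * z = 0 + ⟨1,1⟩ * (0 + ⟨1,1⟩ * (⟨0,-1⟩ * z)) := by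
    have h4 : ((2 : ℤ) : GaussianInt) = ⟨1,1⟩ * (⟨1,1⟩ * ⟨0,-1⟩) := by ext <;> simp
    rw [h4]; ring
  rw [he]
  exact h3

lemma Bset_pow2 (l : ℕ) (z : GaussianInt) (n : ℕ) (hz : z ∈ Bset n) :
    (((2:ℤ)^l : ℤ) : GaussianInt) * z ∈ Bset (n + 2*l) := by
  induction l with
  | zero => simpa using hz
  | succ l ih =>
    have h2 := Bset_double _ _ ih
    have he : (((2:ℤ)^(l+1) : ℤ) : GaussianInt) * z
        = ((2:ℤ) : GaussianInt) * ((((2:ℤ)^l : ℤ) : GaussianInt) * z) := by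
      push_cast [pow_succ]; ring
    rw [he]
    have harr : n + 2*(l+1) = n + 2*l + 2 := by omega
    rw [harr]
    exact h2





lemma lemA : ∀ m : ℕ, ∀ x y : ℤ, (x % 2 = 1 ∨ y % 2 = 1) →
    x.natAbs + 2 ≤ w m → y.natAbs + 2 ≤ w m → x.natAbs + y.natAbs + 3 ≤ w (m+1) →
    (⟨x, y⟩ : GaussianInt) ∈ Bset m := by
  intro m
  induction m with
  | zero =>
    intro x y hodd hx hy hxy
    have hw0 : w 0 = 3 := rfl
    have hw1 : w (0+1) = 4 := rfl
    have h : (x = 1 ∧ y = 0) ∨ (x = -1 ∧ y = 0) ∨ (x = 0 ∧ y = 1) ∨ (x = 0 ∧ y = -1) := by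
      omega
    rcases h with ⟨rfl, rfl⟩ | ⟨rfl, rfl⟩ | ⟨rfl, rfl⟩ | ⟨rfl, rfl⟩
    · exact digit_mem_Bset _ (by right; left; ext <;> simp) 0
    · exact digit_mem_Bset _ (by right; right; left; ext <;> simp) 0
    · exact digit_mem_Bset _ (by right; right; right; left; rfl) 0
    · exact digit_mem_Bset _ (by right; right; right; right; rfl) 0
  | succ m ih =>
    intro x y hodd hx hy hxy
    obtain ⟨hC, hB2, hB3, hBA⟩ := w_facts m
    have hA3 := three_le_w m
    have hC2 : w (m+1+1) = 2 * w m := (w_facts m).1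
    have key : ∀ s t a b : ℤ,
        (⟨s, t⟩ : GaussianInt) ∈ ({0, 1, -1, ⟨0, 1⟩, ⟨0, -1⟩} : Set GaussianInt) →
        (a % 2 = 1 ∨ b % 2 = 1) →
        a.natAbs + 2 ≤ w m → b.natAbs + 2 ≤ w m → a.natAbs + b.natAbs + 3 ≤ w (m+1) →
        x = s + a - b → y = t + a + b →
        (⟨x, y⟩ : GaussianInt) ∈ Bset (m+1) := by
      intro s t a b hmem hpar h1 h2 h3 hxe hye
      have hz : (⟨x, y⟩ : GaussianInt) = ⟨s, t⟩ + ⟨1, 1⟩ * ⟨a, b⟩ := by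
        ext <;> simp <;> omega
      rw [hz]
      exact Bset_shift _ hmem _ m (ih a b hpar h1 h2 h3)
    rcases Int.emod_emod_of_dvd x (by norm_num : (2:ℤ) ∣ 2) ▸ (by omega : x % 2 = 0 ∨ x % 2 = 1) with hx2 | hx2
    · -- x even, y odd
      have hy2 : y % 2 = 1 := by rcases hodd with h | h; · omega
                                 · exact h
      by_cases hxpos : 0 < x
      · exact key 1 0 ((x - 1 + y)/2) ((y - x + 1)/2) (by right; left; ext <;> simp)
          (by omega) (by omega) (by omega) (by omega) (by omega) (by omega)
      · exact key (-1) 0 ((x + 1 + y)/2) ((y - x - 1)/2) (by right; right; left; ext <;> simp)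
          (by omega) (by omega) (by omega) (by omega) (by omega) (by omega)
    · -- x odd
      rcases (by omega : y % 2 = 0 ∨ y % 2 = 1) with hy2 | hy2
      · by_cases hypos : 0 < y
        · exact key 0 1 ((x + y - 1)/2) ((y - 1 - x)/2) (by right; right; right; left; rfl)
            (by omega) (by omega) (by omega) (by omega) (by omega) (by omega)
        · exact key 0 (-1) ((x + y + 1)/2) ((y + 1 - x)/2) (by right; right; right; right; rfl)
            (by omega) (by omega) (by omega) (by omega) (by omega) (by omega)
      · exact key 0 0 ((x + y)/2) ((y - x)/2) (by left; ext <;> simp)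
          (by omega) (by omega) (by omega) (by omega) (by omega) (by omega)


theorem oct_exact_pow_in_B_succ (n l : ℕ) (x y : ℤ)
    (hne : (⟨x, y⟩ : GaussianInt) ≠ 0)
    (hx : |x| ≤ (w n : ℤ) - 2) (hy : |y| ≤ (w n : ℤ) - 2)
    (hxy : |x| + |y| ≤ (w (n + 1) : ℤ) - 3)
    (hl : 2 ^ l ∣ Int.gcd x y) (hl2 : ¬ 2 ^ (l + 1) ∣ Int.gcd x y)
    (hne2 : l ≠ n / 2 + 1) :
    l ≤ n / 2 ∧ (⟨x, y⟩ : GaussianInt) ∈ Bset (n + 1) := by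
  have habs := Int.abs_eq_natAbs
  have hxN : x.natAbs + 2 ≤ w n := by rw [habs] at hx; omega
  have hyN : y.natAbs + 2 ≤ w n := by rw [habs] at hy; omega
  have hxyN : x.natAbs + y.natAbs + 3 ≤ w (n+1) := by rw [habs x, habs y] at hxy; omega
  have hln2 : l ≤ n / 2 := by
    by_contra hcon
    have hll : n/2 + 2 ≤ l := by omega
    have hd : (2:ℕ)^(n/2+2) ∣ Int.gcd x y := dvd_trans (pow_dvd_pow 2 hll) hl
    have hwle := w_le_pow n
    have hdx : (2:ℕ)^(n/2+2) ∣ x.natAbs :=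
      dvd_trans hd (Nat.gcd_dvd_left _ _)
    have hdy : (2:ℕ)^(n/2+2) ∣ y.natAbs :=
      dvd_trans hd (Nat.gcd_dvd_right _ _)
    have hx0 : x.natAbs = 0 := Nat.eq_zero_of_dvd_of_lt hdx (by omega)
    have hy0 : y.natAbs = 0 := Nat.eq_zero_of_dvd_of_lt hdy (by omega)
    apply hne
    have hx0' : x = 0 := by omega
    have hy0' : y = 0 := by omega
    rw [hx0', hy0']
    ext <;> simp
  refine ⟨hln2, ?_⟩
  have h2l : 2*l ≤ n := by omega
  -- extract the 2^l factor
  have hdx : ((2:ℤ))^l ∣ x := by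
    have h1 : ((2^l : ℕ) : ℤ) ∣ (Int.gcd x y : ℤ) := Int.natCast_dvd_natCast.mpr hl
    have h2 : ((Int.gcd x y : ℕ) : ℤ) ∣ x := Int.gcd_dvd_left x y
    have := dvd_trans h1 h2
    push_cast at this
    exact this
  have hdy : ((2:ℤ))^l ∣ y := by
    have h1 : ((2^l : ℕ) : ℤ) ∣ (Int.gcd x y : ℤ) := Int.natCast_dvd_natCast.mpr hl
    have h2 : ((Int.gcd x y : ℕ) : ℤ) ∣ y := Int.gcd_dvd_right x y
    have := dvd_trans h1 h2
    push_cast at this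
    exact this
  obtain ⟨x', hx'⟩ := hdx
  obtain ⟨y', hy'⟩ := hdy
  have hodd : x' % 2 = 1 ∨ y' % 2 = 1 := by
    by_contra hcon
    push_neg at hcon
    have hex : (2:ℤ) ∣ x' := by omega
    have hey : (2:ℤ) ∣ y' := by omega
    apply hl2
    have hgx : ((2:ℤ))^(l+1) ∣ x := by
      obtain ⟨u, hu⟩ := hex
      exact ⟨u, by rw [hx', hu, pow_succ]; ring⟩
    have hgy : ((2:ℤ))^(l+1) ∣ y := by
      obtain ⟨u, hu⟩ := hey
      exact ⟨u, by rw [hy', hu, pow_succ]; ring⟩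
    have hg : ((2:ℤ))^(l+1) ∣ ((Int.gcd x y : ℕ) : ℤ) := Int.dvd_coe_gcd hgx hgy
    have hg2 : (((2:ℕ))^(l+1) : ℤ) ∣ ((Int.gcd x y : ℕ) : ℤ) := by push_cast; exact hg
    exact_mod_cast hg2
  -- natAbs equations
  have hxx : x.natAbs = 2^l * x'.natAbs := by
    rw [hx', Int.natAbs_mul]
    congr 1
  have hyy : y.natAbs = 2^l * y'.natAbs := by
    rw [hy', Int.natAbs_mul]
    congr 1
  set m := n + 1 - 2*l with hmdef
  have hm : m + 2*l = n + 1 := by omega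
  have hw1 : w (n+1) = 2^l * w m := by rw [← hm]; exact w_add_two_mul m l
  have hw2 : 2 * w n = 2^l * w (m+1) := by
    have h1 : w (m+1+2*l) = 2^l * w (m+1) := w_add_two_mul (m+1) l
    have h2 : m+1+2*l = n+2 := by omega
    rw [h2] at h1
    rw [← h1, (w_facts n).1]
  have hgap1 := w_gap1 n
  have hgap2 := w_gap2 n
  have hple : (2:ℕ)^l ≤ 2^(n/2) := Nat.pow_le_pow_right (by norm_num) hln2
  have hpos : 0 < (2:ℕ)^l := Nat.pow_pos (by norm_num)
  have t1 : x'.natAbs + 2 ≤ w m := by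
    have e1 : (2:ℕ)^l * (x'.natAbs + 1) = 2^l * x'.natAbs + 2^l := by ring
    have e2 : (2:ℕ)^l * (x'.natAbs + 1) < 2^l * w m := by omega
    have := Nat.lt_of_mul_lt_mul_left e2
    omega
  have t2 : y'.natAbs + 2 ≤ w m := by
    have e1 : (2:ℕ)^l * (y'.natAbs + 1) = 2^l * y'.natAbs + 2^l := by ring
    have e2 : (2:ℕ)^l * (y'.natAbs + 1) < 2^l * w m := by omega
    have := Nat.lt_of_mul_lt_mul_left e2
    omega
  have t3 : x'.natAbs + y'.natAbs + 3 ≤ w (m+1) := by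
    have e1 : (2:ℕ)^l * (x'.natAbs + y'.natAbs + 2)
        = 2^l * x'.natAbs + 2^l * y'.natAbs + 2^l + 2^l := by ring
    have e2 : (2:ℕ)^l * (x'.natAbs + y'.natAbs + 2) < 2^l * w (m+1) := by omega
    have := Nat.lt_of_mul_lt_mul_left e2
    omega
  have hB : (⟨x', y'⟩ : GaussianInt) ∈ Bset m := lemA m x' y' hodd t1 t2 t3
  have hBB := Bset_pow2 l _ m hB
  rw [hm] at hBB
  have heq : (⟨x, y⟩ : GaussianInt) = (((2:ℤ)^l : ℤ) : GaussianInt) * ⟨x', y'⟩ := by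
    have hc : (((2:ℤ)^l : ℤ) : GaussianInt) = ⟨(2:ℤ)^l, 0⟩ := by
      ext
      · exact Zsqrtd.re_intCast _
      · exact Zsqrtd.im_intCast _
    rw [hc, hx', hy']
    ext <;> simp [Zsqrtd.re_mul, Zsqrtd.im_mul]
  rw [heq]
  exact hBB
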